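/- arXiv:math/0608017 — 3 statements merged into one kernel-verified Lean document; each statement's English description precedes it below -/
import Mathlib

section
/- (Uniqueness of zero components of Lasso solutions.) Let X ∈ ℝ^{n×p}, a ∈ {1,…,p}, A ⊆ {1,…,p}\{a}, λ > 0, and let G_b(θ) = −2n⁻¹⟨X_a − Xθ, X_b⟩. If θ̂ is a minimizer of n⁻¹‖X_a − Xθ‖₂² + λ‖θ‖₁ over {θ ∈ ℝ^p : θ_k = 0 for all k ∉ A} and |G_b(θ̂)| < λ (strict inequality) for some b ∈ A, then every minimizer θ' of the same problem satisfies θ'_b = 0. -/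
set_option autoImplicit false

open MeasureTheory ProbabilityTheory Real Filter Finset

noncomputable section

namespace MB

/-- The population prediction risk `E (X_a - ∑ k, θ k * X k)^2` for `X ~ N(0, S)`,
written in terms of the covariance matrix `S`. -/
def popRisk {q : ℕ} (S : Matrix (Fin q) (Fin q) ℝ) (a : Fin q) (θ : Fin q → ℝ) : ℝ :=
  S a a - 2 * ∑ k, θ k * S a k + ∑ k, ∑ l, θ k * S k l * θ l

/-- `θ` minimizes the population risk among vectors supported on `A`. -/
def IsPopMin {q : ℕ} (S : Matrix (Fin q) (Fin q) ℝ) (a : Fin q) (A : Set (Fin q))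
    (θ : Fin q → ℝ) : Prop :=
  (∀ k, k ∉ A → θ k = 0) ∧
    ∀ θ' : Fin q → ℝ, (∀ k, k ∉ A → θ' k = 0) → popRisk S a θ ≤ popRisk S a θ'

/-- The neighborhood of node `a` : nodes `b ≠ a` with a nonzero entry `K_{ab}` of the
inverse covariance matrix `K = S⁻¹`. -/
def neigh {q : ℕ} (S : Matrix (Fin q) (Fin q) ℝ) (a : Fin q) : Finset (Fin q) :=
  Finset.univ.filter fun b => b ≠ a ∧ S⁻¹ a b ≠ 0

/-- Optimal coefficients `θ^a` for prediction of `X_a` from all remaining variables: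
`θ^a_b = - K_{ab} / K_{aa}`. -/
def thetaA {q : ℕ} (S : Matrix (Fin q) (Fin q) ℝ) (a : Fin q) : Fin q → ℝ := fun b =>
  if b = a then 0 else -(S⁻¹ a b) / S⁻¹ a a

/-- Partial correlation `π_{ab} = - K_{ab} / sqrt (K_{aa} K_{bb})`. -/
def parcor {q : ℕ} (S : Matrix (Fin q) (Fin q) ℝ) (a b : Fin q) : ℝ :=
  -(S⁻¹ a b) / Real.sqrt (S⁻¹ a a * S⁻¹ b b)

/-- `S_a(b) = ∑_{k ∈ ne_a} sign (θ^{a,ne_a}_k) * θ^{b,ne_a}_k`, where `θp c A` denotes the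
population coefficient vector `θ^{c,A}`. -/
def Sfun {q : ℕ} (S : Matrix (Fin q) (Fin q) ℝ)
    (θp : Fin q → Set (Fin q) → Fin q → ℝ) (a b : Fin q) : ℝ :=
  ∑ k ∈ neigh S a,
    Real.sign (θp a (neigh S a : Set (Fin q)) k) * θp b (neigh S a : Set (Fin q)) k

/-- The empirical Lasso objective `n⁻¹ ‖X_a - X θ‖₂² + λ ‖θ‖₁`. -/
def lassoObj {n q : ℕ} (X : Fin n → Fin q → ℝ) (a : Fin q) (lam : ℝ) (θ : Fin q → ℝ) : ℝ :=
  (n : ℝ)⁻¹ * ∑ i, (X i a - ∑ k, X i k * θ k) ^ 2 + lam * ∑ k, |θ k|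

/-- `θ` is a Lasso solution with support restricted to `A`. -/
def IsLasso {n q : ℕ} (X : Fin n → Fin q → ℝ) (a : Fin q) (A : Set (Fin q)) (lam : ℝ)
    (θ : Fin q → ℝ) : Prop :=
  (∀ k, k ∉ A → θ k = 0) ∧
    ∀ θ' : Fin q → ℝ, (∀ k, k ∉ A → θ' k = 0) → lassoObj X a lam θ ≤ lassoObj X a lam θ'

/-- `θ` is a Lasso solution with support restricted to `A` and with coordinate `b`
pinned to the value `β`. -/
def IsLassoPinned {n q : ℕ} (X : Fin n → Fin q → ℝ) (a : Fin q) (A : Set (Fin q))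
    (b : Fin q) (β lam : ℝ) (θ : Fin q → ℝ) : Prop :=
  θ b = β ∧ (∀ k, k ∉ A → θ k = 0) ∧
    ∀ θ' : Fin q → ℝ, (θ' b = β ∧ ∀ k, k ∉ A → θ' k = 0) →
      lassoObj X a lam θ ≤ lassoObj X a lam θ'

/-- The gradient component `G_b(θ) = -2 n⁻¹ ⟨X_a - X θ, X_b⟩` of the quadratic part of
the Lasso objective. -/
def grad {n q : ℕ} (X : Fin n → Fin q → ℝ) (a : Fin q) (θ : Fin q → ℝ) (b : Fin q) : ℝ :=
  -2 * (n : ℝ)⁻¹ * ∑ i, (X i a - ∑ k, X i k * θ k) * X i b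

/-- `ν` is the centered Gaussian measure on `ℝ^q` with covariance matrix `S`,
characterized through its one-dimensional projections. -/
def IsGaussian {q : ℕ} (S : Matrix (Fin q) (Fin q) ℝ) (ν : Measure (Fin q → ℝ)) : Prop :=
  IsProbabilityMeasure ν ∧
    ∀ u : Fin q → ℝ,
      ν.map (fun x => ∑ i, u i * x i) =
        gaussianReal 0 (Real.toNNReal (∑ i, ∑ j, u i * S i j * u j))

/-- The standard normal c.d.f. `Φ`. -/
def stdGaussCdf (z : ℝ) : ℝ := ((gaussianReal 0 1) (Set.Iic z)).toReal

/-- The upper quantile function `Φ̃⁻¹` with `Φ̃ = 1 - Φ`. -/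
def upperQuantile (q : ℝ) : ℝ := sInf {z : ℝ | 1 - stdGaussCdf z ≤ q}

end MB



lemma lasso_mid_quad {n P : ℕ} (X : Fin n → Fin P → ℝ) (a : Fin P) (θ θ' : Fin P → ℝ) :
    ∑ i, (X i a - ∑ k, X i k * ((θ k + θ' k)/2))^2
      = (∑ i, (X i a - ∑ k, X i k * θ k)^2 + ∑ i, (X i a - ∑ k, X i k * θ' k)^2)/2
        - (∑ i, (∑ k, X i k * (θ k - θ' k))^2)/4 := by
  have key : ∀ i, (X i a - ∑ k, X i k * ((θ k + θ' k)/2))^2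
      = ((X i a - ∑ k, X i k * θ k)^2 + (X i a - ∑ k, X i k * θ' k)^2)/2
        - (∑ k, X i k * (θ k - θ' k))^2/4 := by
    intro i
    have h1 : ∑ k, X i k * ((θ k + θ' k)/2)
        = ((∑ k, X i k * θ k) + ∑ k, X i k * θ' k)/2 := by
      rw [← Finset.sum_add_distrib, Finset.sum_div]
      exact Finset.sum_congr rfl fun k _ => by ring
    have h2 : ∑ k, X i k * (θ k - θ' k)
        = (∑ k, X i k * θ k) - ∑ k, X i k * θ' k := by
      rw [← Finset.sum_sub_distrib]
      exact Finset.sum_congr rfl fun k _ => by ring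
    rw [h1, h2]; ring
  rw [Finset.sum_congr rfl fun i _ => key i]
  rw [Finset.sum_sub_distrib, ← Finset.sum_div, ← Finset.sum_div, Finset.sum_add_distrib]

lemma lasso_perturb {n P : ℕ} (X : Fin n → Fin P → ℝ) (a b : Fin P) (lam t : ℝ)
    (θ : Fin P → ℝ) :
    MB.lassoObj X a lam (Function.update θ b (θ b - t)) =
      MB.lassoObj X a lam θ - t * MB.grad X a θ b
        + t^2 * ((n:ℝ)⁻¹ * ∑ i, (X i b)^2) + lam * (|θ b - t| - |θ b|) := by
  unfold MB.lassoObj MB.grad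
  have hs : ∀ i : Fin n, ∑ k, X i k * (Function.update θ b (θ b - t)) k
      = (∑ k, X i k * θ k) - t * X i b := by
    intro i
    have h : ∀ k : Fin P, X i k * (Function.update θ b (θ b - t)) k
        = X i k * θ k + (if k = b then -(t * X i b) else 0) := by
      intro k
      by_cases h : k = b
      · subst h; simp [Function.update_self]; ring
      · simp [Function.update_of_ne h, h]
    rw [Finset.sum_congr rfl fun k _ => h k, Finset.sum_add_distrib,
      Finset.sum_ite_eq' Finset.univ b (fun _ => -(t * X i b))]
    simp; ring
  have hq : ∑ i, (X i a - ∑ k, X i k * (Function.update θ b (θ b - t)) k)^2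
      = ∑ i, (X i a - ∑ k, X i k * θ k)^2
        + 2 * t * ∑ i, (X i a - ∑ k, X i k * θ k) * X i b
        + t^2 * ∑ i, (X i b)^2 := by
    have h : ∀ i : Fin n, (X i a - ∑ k, X i k * (Function.update θ b (θ b - t)) k)^2
        = (X i a - ∑ k, X i k * θ k)^2
          + 2 * t * ((X i a - ∑ k, X i k * θ k) * X i b) + t^2 * (X i b)^2 := by
      intro i; rw [hs i]; ring
    rw [Finset.sum_congr rfl fun i _ => h i, Finset.sum_add_distrib, Finset.sum_add_distrib,
      ← Finset.mul_sum, ← Finset.mul_sum]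
  have hl1 : ∑ k, |Function.update θ b (θ b - t) k| = ∑ k, |θ k| - |θ b| + |θ b - t| := by
    rw [← Finset.add_sum_erase _ (fun k => |Function.update θ b (θ b - t) k|) (Finset.mem_univ b),
      ← Finset.add_sum_erase _ (fun k => |θ k|) (Finset.mem_univ b)]
    rw [Finset.sum_congr rfl fun k hk => by
      rw [Function.update_of_ne (Finset.ne_of_mem_erase hk)]]
    simp [Function.update_self]; ring
  rw [hq, hl1]; ring
/-- **Lemma A.1, second part (uniqueness of zero components of Lasso solutions).** If some
Lasso minimizer `θ̂` restricted to `A` has `|G_b(θ̂)| < λ` for some `b ∈ A`, then every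
minimizer of the same problem vanishes at `b`. -/
theorem lemmaA1_zero_components_unique
    (n P : ℕ) (X : Fin n → Fin P → ℝ) (a : Fin P)
    (A : Set (Fin P)) (ha : a ∉ A)
    (lam : ℝ) (hlam : 0 < lam)
    (θhat : Fin P → ℝ) (hmin : MB.IsLasso X a A lam θhat)
    (b : Fin P) (hb : b ∈ A) (hG : |MB.grad X a θhat b| < lam) :
    ∀ θ' : Fin P → ℝ, MB.IsLasso X a A lam θ' → θ' b = 0 := by
  intro θ' hθ'
  by_contra hcne
  have hle1 := hmin.2 θ' hθ'.1
  have hle2 := hθ'.2 θhat hmin.1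
  have heq : MB.lassoObj X a lam θ' = MB.lassoObj X a lam θhat := le_antisymm hle2 hle1
  -- Step 1: gradients at b agree at any two minimizers
  have hgrad : MB.grad X a θ' b = MB.grad X a θhat b := by
    rcases Nat.eq_zero_or_pos n with h0 | hn
    · subst h0; simp [MB.grad]
    · set m : Fin P → ℝ := fun k => (θhat k + θ' k)/2 with hm
      have hmsupp : ∀ k, k ∉ A → m k = 0 := fun k hk => by
        simp [hm, hmin.1 k hk, hθ'.1 k hk]
      have h1 := hmin.2 m hmsupp
      have h2 : MB.lassoObj X a lam m
          ≤ (MB.lassoObj X a lam θhat + MB.lassoObj X a lam θ')/2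
            - (n:ℝ)⁻¹ * ((∑ i, (∑ k, X i k * (θhat k - θ' k))^2)/4) := by
        unfold MB.lassoObj
        have hq := lasso_mid_quad X a θhat θ'
        have hl1 : ∑ k, |m k| ≤ ((∑ k, |θhat k|) + ∑ k, |θ' k|)/2 := by
          calc ∑ k, |m k| ≤ ∑ k, (|θhat k| + |θ' k|)/2 := by
                refine Finset.sum_le_sum fun k _ => ?_
                have h := abs_add_le (θhat k) (θ' k)
                have h2 : |m k| = |θhat k + θ' k|/2 := by
                  rw [hm]; rw [abs_div, abs_two]
                linarith
            _ = ((∑ k, |θhat k|) + ∑ k, |θ' k|)/2 := by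
                rw [← Finset.sum_div, Finset.sum_add_distrib]
        have hninv : (0:ℝ) ≤ (n:ℝ)⁻¹ := inv_nonneg.mpr (Nat.cast_nonneg n)
        have hmid : ∑ i, (X i a - ∑ k, X i k * m k)^2
            = ∑ i, (X i a - ∑ k, X i k * ((θhat k + θ' k)/2))^2 := by
          simp only [hm]
        rw [hmid, hq]
        nlinarith [mul_le_mul_of_nonneg_left hl1 (le_of_lt hlam)]
      have hS : ∑ i, (∑ k, X i k * (θhat k - θ' k))^2 = 0 := by
        have hpos : (0:ℝ) < (n:ℝ)⁻¹ := by
          rw [inv_pos]; exact_mod_cast hn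
        have hnn : (0:ℝ) ≤ ∑ i, (∑ k, X i k * (θhat k - θ' k))^2 :=
          Finset.sum_nonneg fun i _ => sq_nonneg _
        nlinarith [h1, h2, heq]
      have hfit : ∀ i, ∑ k, X i k * θhat k = ∑ k, X i k * θ' k := by
        intro i
        have h0 := (Finset.sum_eq_zero_iff_of_nonneg fun i _ => sq_nonneg _).mp hS i
          (Finset.mem_univ i)
        have h1' : ∑ k, X i k * (θhat k - θ' k) = 0 := by
          have := sq_eq_zero_iff.mp h0; exact this
        have h2' : (∑ k, X i k * θhat k) - ∑ k, X i k * θ' k = 0 := by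
          rw [← h1', ← Finset.sum_sub_distrib]
          exact Finset.sum_congr rfl fun k _ => by ring
        linarith
      unfold MB.grad
      congr 1
      exact Finset.sum_congr rfl fun i _ => by rw [hfit i]
  have hG' : |MB.grad X a θ' b| < lam := by rw [hgrad]; exact hG
  -- Step 2: perturb θ' at coordinate b to contradict minimality
  set G := MB.grad X a θ' b with hGdef
  set C := (n:ℝ)⁻¹ * ∑ i, (X i b)^2 with hCdef
  have hC : 0 ≤ C := by
    apply mul_nonneg (inv_nonneg.mpr (Nat.cast_nonneg n))
    exact Finset.sum_nonneg fun i _ => sq_nonneg _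
  set c := θ' b with hcdef
  set δ : ℝ := min |c| ((lam - |G|)/(C+1)) with hδ
  have habs := abs_nonneg G
  have hδpos : 0 < δ :=
    lt_min (abs_pos.2 hcne) (div_pos (by linarith [abs_lt.mp hG']) (by linarith))
  have hδc : δ ≤ |c| := min_le_left _ _
  have hδG : δ * (C+1) ≤ lam - |G| := by
    have := min_le_right |c| ((lam - |G|)/(C+1))
    calc δ * (C+1) ≤ ((lam - |G|)/(C+1)) * (C+1) := by
          apply mul_le_mul_of_nonneg_right (by exact this) (by linarith)
      _ = lam - |G| := by field_simp
  set t : ℝ := if 0 < c then δ else -δ with ht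
  have h_abs_t : |t| = δ := by
    rw [ht]; split
    · exact abs_of_pos hδpos
    · rw [abs_neg]; exact abs_of_pos hδpos
  have h_abs_ct : |c - t| = |c| - δ := by
    rcases lt_or_ge 0 c with hcpos | hcle
    · have ht' : t = δ := if_pos hcpos
      have hδc' : δ ≤ c := hδc.trans (abs_of_pos hcpos).le
      rw [ht', abs_of_nonneg (by linarith : (0:ℝ) ≤ c - δ), abs_of_pos hcpos]
    · have hcneg : c < 0 := lt_of_le_of_ne hcle hcne
      have ht' : t = -δ := if_neg (not_lt.mpr hcle)
      have hδc' : δ ≤ -c := hδc.trans (abs_of_neg hcneg).le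
      rw [ht', abs_of_neg hcneg, abs_of_nonpos (by linarith : c - -δ ≤ 0)]
      ring
  have hkey := lasso_perturb X a b lam t θ'
  rw [← hcdef] at hkey
  have hsupp'' : ∀ k, k ∉ A → Function.update θ' b (c - t) k = 0 := by
    intro k hk
    rw [Function.update_of_ne (by rintro rfl; exact hk hb)]
    exact hθ'.1 k hk
  have hge := hθ'.2 _ hsupp''
  -- show the perturbed objective is strictly smaller
  have htG : - t * G ≤ δ * |G| := by
    calc -t * G ≤ |(-t) * G| := le_abs_self _
      _ = |t| * |G| := by rw [abs_mul, abs_neg]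
      _ = δ * |G| := by rw [h_abs_t]
  have ht2 : t^2 = δ^2 := by rw [← sq_abs t, h_abs_t]
  have hlt : MB.lassoObj X a lam (Function.update θ' b (c - t)) < MB.lassoObj X a lam θ' := by
    rw [hkey, h_abs_ct, ht2]
    have hδC : δ * C < lam - |G| := by nlinarith
    nlinarith [htG, hδC, hδpos, mul_lt_mul_of_pos_left hδC hδpos]
  exact absurd hge (not_le.mpr hlt)
end
end

section
/- (Gradient identity on the sign-agreement event.) Let Σ be a p×p positive definite matrix with X ~ N(0,Σ), fix a node a with neighborhood ne_a, let X ∈ ℝ^{n×p} be any data matrix with columns X_1,…,X_p, and let λ > 0. Suppose θ̂ is a minimizer of n⁻¹‖X_a − Xθ‖₂² + λ‖θ‖₁ over {θ ∈ ℝ^p : θ_k = 0 for all k ∉ ne_a} such that sign(θ̂_k) = sign(θ^{a,ne_a}_k) for all k ∈ ne_a (in particular θ̂_k ≠ 0 for k ∈ ne_a, since θ^{a,ne_a}_k ≠ 0 there). For b ∉ ne_a ∪ {a}, define the column vector V_b = X_b − Σ_{m ∈ ne_a} θ^{b,ne_a}_m X_m. Then the gradient component at b satisfies the exact identity G_b(θ̂)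 = −S_a(b)·λ − 2n⁻¹⟨X_a − Xθ̂, V_b⟩, where G_b(θ) = −2n⁻¹⟨X_a − Xθ, X_b⟩ and S_a(b) = Σ_{m ∈ ne_a} sign(θ^{a,ne_a}_m) θ^{b,ne_a}_m. -/
set_option autoImplicit false

open MeasureTheory ProbabilityTheory Real Filter Finset

noncomputable section

lemma nonneg_of_quad (c d ε : ℝ) (hε : 0 < ε)
    (h : ∀ t, 0 < t → t < ε → 0 ≤ c * t + d * t ^ 2) : 0 ≤ c := by
  by_contra hc
  push_neg at hc
  set t := min (ε / 2) (-c / (2 * (|d| + 1))) with ht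
  have h0 : 0 < t := by
    have : 0 < -c := by linarith
    apply lt_min (by linarith)
    positivity
  have h1 : t < ε := lt_of_le_of_lt (min_le_left _ _) (by linarith)
  have h2 : t ≤ -c / (2 * (|d| + 1)) := min_le_right _ _
  have h3 : 0 ≤ c * t + d * t ^ 2 := h t h0 h1
  have hd : d ≤ |d| := le_abs_self d
  have h4 : t * (2 * (|d| + 1)) ≤ -c := by
    rw [le_div_iff₀ (by positivity)] at h2
    linarith
  nlinarith [sq_nonneg t, abs_nonneg d, mul_pos h0 h0]

lemma zero_of_quad (c d ε : ℝ) (hε : 0 < ε)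
    (h : ∀ t : ℝ, |t| < ε → 0 ≤ c * t + d * t ^ 2) : c = 0 := by
  have h1 : 0 ≤ c := nonneg_of_quad c d ε hε fun t h0 hlt =>
    h t (by rw [abs_of_pos h0]; exact hlt)
  have h2 : 0 ≤ -c := nonneg_of_quad (-c) d ε hε fun t h0 hlt => by
    have := h (-t) (by rw [abs_neg, abs_of_pos h0]; exact hlt)
    nlinarith
  linarith

lemma popMin_normal {q : ℕ} {S : Matrix (Fin q) (Fin q) ℝ}
    (hsymm : ∀ i j, S i j = S j i)
    {a : Fin q} {A : Set (Fin q)} {θ : Fin q → ℝ} (hmin : MB.IsPopMin S a A θ)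
    {k : Fin q} (hk : k ∈ A) : ∑ l, S k l * θ l = S a k := by
  have key : ∀ t : ℝ, |t| < 1 →
      0 ≤ (2 * (∑ l, S k l * θ l) - 2 * S a k) * t + S k k * t ^ 2 := by
    intro t _
    set θ' : Fin q → ℝ := fun l => θ l + (if l = k then t else 0) with hθ'
    have hsupp : ∀ l, l ∉ A → θ' l = 0 := by
      intro l hl
      have h1 := hmin.1 l hl
      have h2 : l ≠ k := fun h => hl (h ▸ hk)
      simp [hθ', h1, h2]
    have hle := hmin.2 θ' hsupp
    have e1 : ∑ l, θ' l * S a l = (∑ l, θ l * S a l) + t * S a k := by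
      simp only [hθ', add_mul, ite_mul, zero_mul, Finset.sum_add_distrib]
      rw [Finset.sum_ite_eq' Finset.univ k (fun l => t * S a l)]
      simp
    have expand : ∀ i l, θ' i * S i l * θ' l =
        θ i * S i l * θ l + θ i * S i l * (if l = k then t else 0)
          + (if i = k then t else 0) * S i l * θ l
          + (if i = k then t else 0) * S i l * (if l = k then t else 0) := by
      intro i l; simp only [hθ']; ring
    have s2 : ∑ i, ∑ l, θ i * S i l * (if l = k then t else 0)
        = (∑ l, S k l * θ l) * t := by
      have inner : ∀ i : Fin q, ∑ l, θ i * S i l * (if l = k then t else 0)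
          = θ i * S i k * t := fun i => by
        rw [Finset.sum_eq_single k (fun l _ hl => by simp [hl]) (by simp)]
        simp
      simp only [inner]
      rw [Finset.sum_mul]
      exact Finset.sum_congr rfl fun i _ => by rw [hsymm k i]; ring
    have s3 : ∑ i, ∑ l, (if i = k then t else 0) * S i l * θ l
        = (∑ l, S k l * θ l) * t := by
      rw [Finset.sum_eq_single k (fun i _ hi => by simp [hi]) (by simp)]
      rw [Finset.sum_mul]
      exact Finset.sum_congr rfl fun l _ => by simp; ring
    have s4 : ∑ i, ∑ l, (if i = k then t else 0) * S i l * (if l = k then t else 0)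
        = t * S k k * t := by
      rw [Finset.sum_eq_single k (fun i _ hi => by simp [hi]) (by simp)]
      rw [Finset.sum_eq_single k (fun l _ hl => by simp [hl]) (by simp)]
      simp
    have e2 : ∑ i, ∑ l, θ' i * S i l * θ' l =
        (∑ i, ∑ l, θ i * S i l * θ l) + (∑ l, S k l * θ l) * t
          + (∑ l, S k l * θ l) * t + t * S k k * t := by
      simp only [expand, Finset.sum_add_distrib]
      rw [s2, s3, s4]
    have hrisk : MB.popRisk S a θ' = MB.popRisk S a θ
        + (2 * (∑ l, S k l * θ l) - 2 * S a k) * t + S k k * t ^ 2 := by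
      unfold MB.popRisk
      rw [e1, e2]
      ring
    rw [hrisk] at hle
    linarith
  have := zero_of_quad _ _ 1 one_pos key
  linarith

lemma posdef_quadform {q : ℕ} {S : Matrix (Fin q) (Fin q) ℝ} (hS : S.PosDef)
    {d : Fin q → ℝ} (hd : d ≠ 0) : 0 < ∑ k, ∑ l, d k * S k l * d l := by
  have := hS.dotProduct_mulVec_pos hd
  simpa [dotProduct, Matrix.mulVec, Finset.mul_sum, mul_assoc] using this

lemma symm_of_posdef {q : ℕ} {S : Matrix (Fin q) (Fin q) ℝ} (hS : S.PosDef) :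
    ∀ i j, S i j = S j i := by
  intro i j
  have h := hS.1
  rw [Matrix.IsHermitian] at h
  have := congrFun (congrFun h j) i
  simpa [Matrix.conjTranspose_apply] using this

lemma inv_diag_pos {q : ℕ} {S : Matrix (Fin q) (Fin q) ℝ} (hS : S.PosDef) (a : Fin q) :
    0 < S⁻¹ a a := by
  have hinv : (S⁻¹).PosDef := hS.inv
  have h := hinv.dotProduct_mulVec_pos (x := Pi.single a (1:ℝ)) (by
    intro h
    have := congrFun h a
    simp at this)
  have he : dotProduct (star ((Pi.single a 1 : Fin q → ℝ))) (S⁻¹.mulVec (Pi.single a 1 : Fin q → ℝ)) = S⁻¹ a a := by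
    simp [dotProduct, Matrix.mulVec, Pi.single_apply]
  rwa [he] at h

lemma thetaA_normal {q : ℕ} {S : Matrix (Fin q) (Fin q) ℝ} (hS : S.PosDef)
    (a : Fin q) {k : Fin q} (hk : k ≠ a) :
    ∑ l, S k l * MB.thetaA S a l = S a k := by
  have hKsymm : ∀ i j, S⁻¹ i j = S⁻¹ j i := symm_of_posdef hS.inv
  have hKaa : S⁻¹ a a ≠ 0 := (inv_diag_pos hS a).ne'
  have hSK : S * S⁻¹ = 1 := Matrix.mul_nonsing_inv S (Matrix.isUnit_iff_isUnit_det S |>.1 hS.isUnit)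
  have hrow : ∑ l, S k l * S⁻¹ l a = 0 := by
    have := congrFun (congrFun hSK k) a
    simpa [Matrix.mul_apply, Matrix.one_apply, hk] using this
  have step : ∀ l, S k l * MB.thetaA S a l
      = -(S k l * S⁻¹ l a) / S⁻¹ a a + (if l = a then S k a * S⁻¹ a a / S⁻¹ a a else 0) := by
    intro l
    unfold MB.thetaA
    by_cases h : l = a
    · subst h; simp; ring
    · rw [hKsymm a l]; simp [h]; ring
  rw [Finset.sum_congr rfl fun l _ => step l]
  rw [Finset.sum_add_distrib]
  rw [Finset.sum_ite_eq' Finset.univ a]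
  simp only [Finset.mem_univ, if_true]
  have he : ∑ l, -(S k l * S⁻¹ l a) / S⁻¹ a a = -(∑ l, S k l * S⁻¹ l a) / S⁻¹ a a := by
    rw [← Finset.sum_div, ← Finset.sum_neg_distrib]
  rw [he, hrow, neg_zero, zero_div, zero_add, mul_div_assoc, div_self hKaa, mul_one]
  exact symm_of_posdef hS k a

lemma thetaA_supp {q : ℕ} {S : Matrix (Fin q) (Fin q) ℝ} (a : Fin q) {k : Fin q}
    (hk : k ∉ MB.neigh S a) : MB.thetaA S a k = 0 := by
  simp only [MB.neigh, Finset.mem_filter, Finset.mem_univ, true_and, not_and_or,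
    not_not] at hk
  unfold MB.thetaA
  rcases hk with h | h
  · simp [h]
  · rcases em (k = a) with h' | h'
    · simp [h']
    · simp [h', h]

lemma pop_eq_thetaA {q : ℕ} {S : Matrix (Fin q) (Fin q) ℝ} (hS : S.PosDef) (a : Fin q)
    {θ : Fin q → ℝ} (hmin : MB.IsPopMin S a (MB.neigh S a : Set (Fin q)) θ) :
    θ = MB.thetaA S a := by
  set τ := MB.thetaA S a with hτ
  by_contra hne
  set d : Fin q → ℝ := fun l => θ l - τ l with hd
  have hd0 : d ≠ 0 := by
    intro h
    apply hne
    funext l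
    have := congrFun h l
    simp [hd] at this
    linarith
  have hdsupp : ∀ l, l ∉ MB.neigh S a → d l = 0 := by
    intro l hl
    have h1 := hmin.1 l (by simpa using hl)
    have h2 := thetaA_supp a hl
    simp only [hd]
    rw [h1, hτ, h2]
    ring
  have hnorm : ∀ k, k ∈ MB.neigh S a → ∑ l, S k l * d l = 0 := by
    intro k hk
    have hka : k ≠ a := by
      simp only [MB.neigh, Finset.mem_filter] at hk
      exact hk.2.1
    have h1 : ∑ l, S k l * θ l = S a k := popMin_normal (symm_of_posdef hS) hmin (by simpa using hk)
    have h2 : ∑ l, S k l * τ l = S a k := thetaA_normal hS a hka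
    have : ∑ l, S k l * d l = (∑ l, S k l * θ l) - ∑ l, S k l * τ l := by
      rw [← Finset.sum_sub_distrib]
      exact Finset.sum_congr rfl fun l _ => by simp [hd]; ring
    rw [this, h1, h2, sub_self]
  have hquad : ∑ k, ∑ l, d k * S k l * d l = 0 := by
    have : ∀ k, ∑ l, d k * S k l * d l = d k * ∑ l, S k l * d l := by
      intro k
      rw [Finset.mul_sum]
      exact Finset.sum_congr rfl fun l _ => by ring
    rw [Finset.sum_congr rfl fun k _ => this k]
    apply Finset.sum_eq_zero
    intro k _
    by_cases hk : k ∈ MB.neigh S a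
    · rw [hnorm k hk, mul_zero]
    · rw [hdsupp k hk, zero_mul]
  exact absurd hquad (posdef_quadform hS hd0).ne'

lemma abs_add_sign {x t : ℝ} (hx : x ≠ 0) (ht : |t| < |x|) :
    |x + t| = |x| + Real.sign x * t := by
  rcases lt_or_gt_of_ne hx with h | h
  · rw [Real.sign_of_neg h]
    rw [abs_of_neg h] at ht
    rw [abs_of_neg (by cases abs_lt.1 ht; linarith), abs_of_neg h]
    ring
  · rw [Real.sign_of_pos h]
    rw [abs_of_pos h] at ht
    rw [abs_of_pos (by cases abs_lt.1 ht; linarith), abs_of_pos h]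
    ring

lemma lasso_kkt {n q : ℕ} {X : Fin n → Fin q → ℝ} {a : Fin q} {A : Set (Fin q)} {lam : ℝ}
    {θ : Fin q → ℝ} (hmin : MB.IsLasso X a A lam θ) {k : Fin q} (hk : k ∈ A)
    (hθk : θ k ≠ 0) :
    2 * (n : ℝ)⁻¹ * ∑ i, (X i a - ∑ l, X i l * θ l) * X i k = Real.sign (θ k) * lam := by
  set r : Fin n → ℝ := fun i => X i a - ∑ l, X i l * θ l with hr
  have key : ∀ t : ℝ, |t| < |θ k| →
      0 ≤ (lam * Real.sign (θ k) - 2 * (n : ℝ)⁻¹ * ∑ i, r i * X i k) * t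
        + ((n : ℝ)⁻¹ * ∑ i, (X i k) ^ 2) * t ^ 2 := by
    intro t ht
    set θ' : Fin q → ℝ := fun l => θ l + (if l = k then t else 0) with hθ'
    have hsupp : ∀ l, l ∉ A → θ' l = 0 := by
      intro l hl
      have h2 : l ≠ k := fun h => hl (h ▸ hk)
      simp [hθ', hmin.1 l hl, h2]
    have hle := hmin.2 θ' hsupp
    have e1 : ∀ i, ∑ l, X i l * θ' l = (∑ l, X i l * θ l) + X i k * t := by
      intro i
      simp only [hθ', mul_add, Finset.sum_add_distrib, mul_ite, mul_zero]
      rw [Finset.sum_ite_eq' Finset.univ k]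
      simp
    have e2 : ∑ i, (X i a - ∑ l, X i l * θ' l) ^ 2
        = (∑ i, r i ^ 2) - 2 * t * (∑ i, r i * X i k) + t ^ 2 * ∑ i, (X i k) ^ 2 := by
      have : ∀ i, (X i a - ∑ l, X i l * θ' l) ^ 2
          = r i ^ 2 - 2 * t * (r i * X i k) + t ^ 2 * (X i k) ^ 2 := by
        intro i
        rw [e1 i]
        simp only [hr]
        ring
      rw [Finset.sum_congr rfl fun i _ => this i]
      simp [Finset.sum_add_distrib, Finset.sum_sub_distrib, Finset.mul_sum]
    have e3 : ∑ l, |θ' l| = (∑ l, |θ l|) + Real.sign (θ k) * t := by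
      have h1 : ∀ l, |θ' l| = |θ l| + (if l = k then Real.sign (θ k) * t else 0) := by
        intro l
        by_cases h : l = k
        · subst h
          simp only [hθ', if_pos rfl]
          exact abs_add_sign hθk ht
        · simp [hθ', h]
      rw [Finset.sum_congr rfl fun l _ => h1 l, Finset.sum_add_distrib,
        Finset.sum_ite_eq' Finset.univ k]
      simp
    have hobj : MB.lassoObj X a lam θ' = MB.lassoObj X a lam θ
        + (lam * Real.sign (θ k) - 2 * (n : ℝ)⁻¹ * ∑ i, r i * X i k) * t
        + ((n : ℝ)⁻¹ * ∑ i, (X i k) ^ 2) * t ^ 2 := by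
      unfold MB.lassoObj
      rw [e2, e3]
      simp only [hr]
      ring
    rw [hobj] at hle
    linarith
  have := zero_of_quad _ _ _ (abs_pos.2 hθk) key
  linarith

/-- **Gradient identity on the sign-agreement event** (equation (A.30) in the paper). If a
Lasso minimizer `θ̂` restricted to `ne_a` matches the signs of the population coefficients
`θ^{a,ne_a}` on `ne_a`, then for every nonneighbor `b ∉ ne_a ∪ {a}` the gradient component
at `b` equals `-S_a(b)·λ - 2 n⁻¹ ⟨X_a - X θ̂, V_b⟩` with
`V_b = X_b - ∑_{m ∈ ne_a} θ^{b,ne_a}_m X_m`. -/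
theorem gradient_identity_on_sign_event
    (P : ℕ) (S : Matrix (Fin P) (Fin P) ℝ) (hS : S.PosDef)
    (a : Fin P)
    (θpop : Fin P → Set (Fin P) → Fin P → ℝ)
    (hθpop : ∀ (c : Fin P) (A : Set (Fin P)), MB.IsPopMin S c A (θpop c A))
    (n : ℕ) (X : Fin n → Fin P → ℝ)
    (lam : ℝ) (hlam : 0 < lam)
    (θhat : Fin P → ℝ)
    (hmin : MB.IsLasso X a (MB.neigh S a : Set (Fin P)) lam θhat)
    (hsign : ∀ k ∈ MB.neigh S a,
      Real.sign (θhat k) = Real.sign (θpop a (MB.neigh S a : Set (Fin P)) k))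
    (b : Fin P) (hba : b ≠ a) (hb : b ∉ MB.neigh S a) :
    MB.grad X a θhat b =
      -(MB.Sfun S θpop a b) * lam -
        2 * (n : ℝ)⁻¹ * ∑ i, (X i a - ∑ k, X i k * θhat k) *
          (X i b - ∑ m, θpop b (MB.neigh S a : Set (Fin P)) m * X i m) := by
  set A := MB.neigh S a with hA
  set θa := θpop a (A : Set (Fin P)) with hθadef
  set θb := θpop b (A : Set (Fin P)) with hθbdef
  set r : Fin n → ℝ := fun i => X i a - ∑ k, X i k * θhat k with hr
  have hθa : θa = MB.thetaA S a := pop_eq_thetaA hS a (hθpop a _)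
  have hnz : ∀ k ∈ A, θa k ≠ 0 := by
    intro k hk
    rw [hθa]
    simp only [hA, MB.neigh, Finset.mem_filter, Finset.mem_univ, true_and] at hk
    unfold MB.thetaA
    rw [if_neg hk.1]
    exact div_ne_zero (neg_ne_zero.2 hk.2) (inv_diag_pos hS a).ne'
  have hhatnz : ∀ k ∈ A, θhat k ≠ 0 := by
    intro k hk h0
    exact hnz k hk (Real.sign_eq_zero_iff.1
      (by rw [← hsign k hk, h0, Real.sign_zero]))
  have hkkt : ∀ k ∈ A, 2 * (n : ℝ)⁻¹ * ∑ i, r i * X i k = Real.sign (θhat k) * lam :=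
    fun k hk => lasso_kkt hmin (by simpa using hk) (hhatnz k hk)
  have hbsupp : ∀ m, m ∉ A → θb m = 0 := by
    intro m hm
    exact (hθpop b (A : Set (Fin P))).1 m (by simpa using hm)
  have key : ∑ m, θb m * (2 * (n : ℝ)⁻¹ * ∑ i, r i * X i m)
      = (∑ k ∈ A, Real.sign (θa k) * θb k) * lam := by
    rw [← Finset.sum_subset (Finset.subset_univ A)
      (fun m _ hm => by rw [hbsupp m hm, zero_mul])]
    rw [Finset.sum_mul]
    refine Finset.sum_congr rfl fun m hm => ?_
    rw [hkkt m hm, hsign m hm]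
    ring
  have expand : ∑ i, r i * (X i b - ∑ m, θb m * X i m)
      = (∑ i, r i * X i b) - ∑ m, θb m * (∑ i, r i * X i m) := by
    simp only [mul_sub, Finset.sum_sub_distrib]
    congr 1
    have h1 : ∀ i, r i * ∑ m, θb m * X i m = ∑ m, θb m * (r i * X i m) := fun i => by
      rw [Finset.mul_sum]
      exact Finset.sum_congr rfl fun m _ => by ring
    rw [Finset.sum_congr rfl fun i _ => h1 i, Finset.sum_comm]
    exact Finset.sum_congr rfl fun m _ => (Finset.mul_sum _ _ _).symm
  have hSfun : MB.Sfun S θpop a b = ∑ k ∈ A, Real.sign (θa k) * θb k := rfl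
  show -2 * (n : ℝ)⁻¹ * ∑ i, r i * X i b =
    -MB.Sfun S θpop a b * lam -
      2 * (n : ℝ)⁻¹ * ∑ i, r i * (X i b - ∑ m, θb m * X i m)
  rw [expand, hSfun]
  have h2 : ∑ m, θb m * (2 * (n : ℝ)⁻¹ * ∑ i, r i * X i m)
      = 2 * (n : ℝ)⁻¹ * ∑ m, θb m * ∑ i, r i * X i m := by
    rw [Finset.mul_sum]
    exact Finset.sum_congr rfl fun m _ => by ring
  rw [h2] at key
  linarith [key]
end
end

section
/- (Absence of cycles implies neighborhood stability.) Let Σ be a p×p positive definite matrix with unit diagonal (Σ_aa = 1 for all a), K = Σ⁻¹, and suppose there is 0 < v ≤ 1 with 1/K_aa ≥ v² for all a. Suppose the undirected graph on {1,…,p} with edge set {(a,b) : a ≠ b, K_ab ≠ 0} contains no cycles. Then for every node a and every b ∉ ne_a ∪ {a}, the vector θ^{b,ne_a} has at most one nonzero coordinate, its absolute value is at most √(1−v²), and consequently |S_a(b)| ≤ √(1−v²) < 1; in particular the neighborhood-stability condition |S_a(b)| < 1 holds for all nonneighboring pairs. -/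
set_option autoImplicit false

open MeasureTheory ProbabilityTheory Real Filter Finset

noncomputable section

section AuxLemmas

open Matrix

variable {P : ℕ}

private lemma aux_sum_subtype (T : Set (Fin P)) [DecidablePred (· ∈ T)] (f : Fin P → ℝ)
    (hf : ∀ i, i ∉ T → f i = 0) : ∑ i, f i = ∑ i : T, f i := by
  rw [← Finset.sum_subtype (Finset.univ.filter (· ∈ T)) (by simp) f]
  exact (Finset.sum_filter_of_ne (fun x _ hx => by
    by_contra h; exact hx (hf x h))).symm

private lemma dot_symm (S : Matrix (Fin P) (Fin P) ℝ) (hsym : ∀ i j, S i j = S j i)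
    (x y : Fin P → ℝ) : x ⬝ᵥ (S *ᵥ y) = y ⬝ᵥ (S *ᵥ x) := by
  simp only [dotProduct, Matrix.mulVec, Finset.mul_sum]
  rw [Finset.sum_comm]
  exact Finset.sum_congr rfl fun j _ => Finset.sum_congr rfl fun i _ => by
    rw [hsym j i]; ring

private lemma popRisk_eq_quad (S : Matrix (Fin P) (Fin P) ℝ) (b : Fin P) (x : Fin P → ℝ) :
    MB.popRisk S b x = S b b - 2 * (x ⬝ᵥ fun k => S b k) + x ⬝ᵥ (S *ᵥ x) := by
  unfold MB.popRisk
  simp only [dotProduct, Matrix.mulVec, Finset.mul_sum, mul_assoc]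

private lemma risk_decomp (S : Matrix (Fin P) (Fin P) ℝ) (hsym : ∀ i j, S i j = S j i)
    (b : Fin P) (θ d : Fin P → ℝ) :
    MB.popRisk S b (θ + d) = MB.popRisk S b θ + d ⬝ᵥ (S *ᵥ d)
      + 2 * (d ⬝ᵥ (S *ᵥ θ - fun k => S b k)) := by
  have hsq := dot_symm S hsym θ d
  rw [popRisk_eq_quad, popRisk_eq_quad]
  simp only [Matrix.mulVec_add, dotProduct_add, add_dotProduct, dotProduct_sub]
  linear_combination hsq

private lemma popRisk_quad_sub (S : Matrix (Fin P) (Fin P) ℝ) (hsym : ∀ i j, S i j = S j i)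
    (b : Fin P) (x : Fin P → ℝ) :
    MB.popRisk S b x = (Pi.single b 1 - x) ⬝ᵥ (S *ᵥ (Pi.single b 1 - x)) := by
  rw [popRisk_eq_quad]
  simp only [Matrix.mulVec_sub, dotProduct_sub, sub_dotProduct, (show S *ᵥ Pi.single b 1 = fun i => S i b * 1 from funext fun i => dotProduct_single _ _ _),
    single_dotProduct]
  have h1 : (x ⬝ᵥ fun k => S b k) = (fun j => S b j * 1) ⬝ᵥ x := by
    simp [dotProduct, mul_comm]
  have h2 : (x ⬝ᵥ fun i => S i b * 1) = (x ⬝ᵥ fun k => S b k) := by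
    simp only [dotProduct]
    exact Finset.sum_congr rfl fun i _ => by rw [hsym i b]; ring
  have h3 : (S *ᵥ x) b = (fun j => S b j * 1) ⬝ᵥ x := by
    simp [Matrix.mulVec, dotProduct]
  rw [h2, h1, h3]
  ring

private lemma aux_lower (S : Matrix (Fin P) (Fin P) ℝ) (hS : S.PosDef)
    (hsym : ∀ i j, S i j = S j i) (b : Fin P)
    (x : Fin P → ℝ) (hxb : x b = 0) : (S⁻¹ b b)⁻¹ ≤ MB.popRisk S b x := by
  classical
  have hdet : IsUnit S.det := isUnit_iff_ne_zero.mpr hS.det_pos.ne'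
  set e : Fin P → ℝ := Pi.single b 1 with he
  set y : Fin P → ℝ := e - x with hy
  set k : Fin P → ℝ := S⁻¹ *ᵥ e with hk
  have hSk : S *ᵥ k = e := by
    rw [hk, Matrix.mulVec_mulVec, Matrix.mul_nonsing_inv _ hdet, Matrix.one_mulVec]
  have hkb : k b = S⁻¹ b b := by
    rw [hk, he, Matrix.mulVec_single]; simp
  have hKbb : 0 < S⁻¹ b b := by
    have henz : e ≠ 0 := by
      intro h
      have := congrFun h b
      simp [he] at this
    have := hS.inv.dotProduct_mulVec_pos henz
    have hstar : star e = e := funext fun i => rfl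
    rw [hstar] at this
    calc (0:ℝ) < e ⬝ᵥ (S⁻¹ *ᵥ e) := this
      _ = S⁻¹ b b := by rw [he, single_dotProduct, ← he, ← hk, hkb]; ring
  set c : ℝ := (S⁻¹ b b)⁻¹ with hc
  have h0 : 0 ≤ (y - c • k) ⬝ᵥ (S *ᵥ (y - c • k)) := by
    have := hS.posSemidef.dotProduct_mulVec_nonneg (y - c • k)
    have hstar : star (y - c • k) = y - c • k := funext fun i => rfl
    rwa [hstar] at this
  have hyb : y b = 1 := by simp [hy, he, hxb]
  have hyk : y ⬝ᵥ (S *ᵥ k) = 1 := by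
    rw [hSk, he, dotProduct_single, hyb]; ring
  have hky : k ⬝ᵥ (S *ᵥ y) = 1 := by rw [dot_symm S hsym]; exact hyk
  have hkk : k ⬝ᵥ (S *ᵥ k) = S⁻¹ b b := by
    rw [hSk, he, dotProduct_single, hkb]; ring
  have hexp : (y - c • k) ⬝ᵥ (S *ᵥ (y - c • k))
      = y ⬝ᵥ (S *ᵥ y) - 2 * c + c ^ 2 * S⁻¹ b b := by
    simp only [Matrix.mulVec_sub, Matrix.mulVec_smul, dotProduct_sub, sub_dotProduct,
      dotProduct_smul, smul_dotProduct, smul_eq_mul]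
    rw [hyk, hky, hkk]
    ring
  have hcK : c * S⁻¹ b b = 1 := inv_mul_cancel₀ hKbb.ne'
  have hQ : c ≤ y ⬝ᵥ (S *ᵥ y) := by
    rw [hexp] at h0
    nlinarith [h0, hcK]
  rw [popRisk_quad_sub S hsym b x]
  exact hQ

private def Tset (G : SimpleGraph (Fin P)) (A : Finset (Fin P)) (b : Fin P) : Set (Fin P) :=
  {t | ∃ w : G.Walk b t, ∀ x ∈ w.support, x ∉ A}

private lemma Tset_self {G : SimpleGraph (Fin P)} {A : Finset (Fin P)} {b : Fin P}
    (hb : b ∉ A) : b ∈ Tset G A b :=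
  ⟨SimpleGraph.Walk.nil, by simp [hb]⟩

private lemma Tset_not_mem_A {G : SimpleGraph (Fin P)} {A : Finset (Fin P)} {b t : Fin P}
    (ht : t ∈ Tset G A b) : t ∉ A := by
  obtain ⟨w, hw⟩ := ht
  exact hw t w.end_mem_support

private lemma Tset_closure {G : SimpleGraph (Fin P)} {A : Finset (Fin P)} {b t l : Fin P}
    (ht : t ∈ Tset G A b) (h : G.Adj t l) (hl : l ∉ A) : l ∈ Tset G A b := by
  obtain ⟨w, hw⟩ := ht
  refine ⟨w.concat h, ?_⟩
  intro x hx
  rw [SimpleGraph.Walk.support_concat, List.mem_append] at hx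
  rcases hx with hx | hx
  · exact hw x hx
  · simp at hx; subst hx; exact hl

private lemma Tset_of_mem_support {G : SimpleGraph (Fin P)} {A : Finset (Fin P)} {b t : Fin P}
    (w : G.Walk b t) (hw : ∀ x ∈ w.support, x ∉ A) :
    ∀ x ∈ w.support, x ∈ Tset G A b := fun x hx =>
  ⟨w.takeUntil x hx, fun y hy => hw y (w.support_takeUntil_subset hx hy)⟩

private lemma a_not_in_Tset {G : SimpleGraph (Fin P)} {A : Finset (Fin P)} {a b : Fin P}
    (hba : b ≠ a) (hA : ∀ k, G.Adj a k → k ∈ A) : a ∉ Tset G A b := by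
  rintro ⟨w, hw⟩
  obtain ⟨y, hadj, w', hwr⟩ := (w.reverse).exists_eq_cons_of_ne hba.symm
  have hy : y ∈ w.support := by
    have : y ∈ w.reverse.support := by
      rw [hwr, SimpleGraph.Walk.support_cons]
      exact List.mem_cons_of_mem _ w'.start_mem_support
    rwa [SimpleGraph.Walk.support_reverse, List.mem_reverse] at this
  exact hw y hy (hA y hadj)

private lemma aux_unique_attach {G : SimpleGraph (Fin P)} (hG : G.IsAcyclic)
    {A : Finset (Fin P)} {a b : Fin P} (hba : b ≠ a) (haA : a ∉ A)
    (hAadj : ∀ k, k ∈ A → G.Adj a k) (hAadj' : ∀ k, G.Adj a k → k ∈ A)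
    {k₁ k₂ t₁ t₂ : Fin P} (hk₁ : k₁ ∈ A) (hk₂ : k₂ ∈ A)
    (ht₁ : t₁ ∈ Tset G A b) (ht₂ : t₂ ∈ Tset G A b)
    (h1 : G.Adj k₁ t₁) (h2 : G.Adj k₂ t₂) : k₁ = k₂ := by
  by_contra hne
  obtain ⟨w₁, hw₁⟩ := id ht₁
  obtain ⟨w₂, hw₂⟩ := id ht₂
  have hTa := a_not_in_Tset hba hAadj'
  set W : G.Walk t₁ t₂ := w₁.reverse.append w₂ with hW
  have hWT : ∀ x ∈ W.support, x ∈ Tset G A b := by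
    intro x hx
    rw [hW, SimpleGraph.Walk.mem_support_append_iff] at hx
    rcases hx with hx | hx
    · rw [SimpleGraph.Walk.support_reverse, List.mem_reverse] at hx
      exact Tset_of_mem_support w₁ hw₁ x hx
    · exact Tset_of_mem_support w₂ hw₂ x hx
  set p := W.bypass with hp
  have hpPath := W.bypass_isPath
  have hpT : ∀ x ∈ p.support, x ∈ Tset G A b := fun x hx =>
    hWT x (W.support_bypass_subset hx)
  have ha1 : G.Adj a k₁ := hAadj k₁ hk₁
  have ha2 : G.Adj a k₂ := hAadj k₂ hk₂
  have hPath1 : (SimpleGraph.Walk.cons ha2 (SimpleGraph.Walk.cons h2 SimpleGraph.Walk.nil)).IsPath := by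
    rw [SimpleGraph.Walk.isPath_def]
    simp only [SimpleGraph.Walk.support_cons, SimpleGraph.Walk.support_nil]
    refine List.nodup_cons.mpr ⟨?_, List.nodup_cons.mpr ⟨?_, List.nodup_singleton _⟩⟩
    · intro hmem
      simp only [List.mem_cons, List.not_mem_nil, or_false] at hmem
      rcases hmem with h | h
      · exact ha2.ne h
      · exact hTa (h ▸ ht₂)
    · intro hmem
      simp only [List.mem_cons, List.not_mem_nil, or_false] at hmem
      exact Tset_not_mem_A ht₂ (hmem ▸ hk₂)
  have hPath2 : (SimpleGraph.Walk.cons ha1 (SimpleGraph.Walk.cons h1 p)).IsPath := by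
    apply SimpleGraph.Walk.IsPath.cons
    · apply SimpleGraph.Walk.IsPath.cons hpPath
      intro hmem
      exact Tset_not_mem_A (hpT k₁ hmem) hk₁
    · intro hmem
      rw [SimpleGraph.Walk.support_cons] at hmem
      rcases List.mem_cons.mp hmem with h | h
      · exact ha1.ne h
      · exact hTa (hpT a h)
  have hpq := hG.path_unique ⟨_, hPath1⟩ ⟨_, hPath2⟩
  have hsup := congrArg (fun q : G.Path a t₂ => q.1.support) hpq
  simp only [SimpleGraph.Walk.support_cons, SimpleGraph.Walk.support_nil] at hsup
  have h2' := (List.cons_eq_cons.mp hsup).2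
  exact hne ((List.cons_eq_cons.mp h2').1).symm

private lemma aux_exists_u (K : Matrix (Fin P) (Fin P) ℝ) (hK : K.PosDef)
    (T : Set (Fin P)) (b : Fin P) (hb : b ∈ T) :
    ∃ u : Fin P → ℝ, (∀ x, x ∉ T → u x = 0) ∧
      (∀ t ∈ T, (K *ᵥ u) t = if t = b then -1 else 0) := by
  classical
  set f : T → Fin P := Subtype.val with hf
  set K' : Matrix T T ℝ := K.submatrix f f with hK'def
  have hK' : K'.PosDef := by
    refine Matrix.PosDef.of_dotProduct_mulVec_pos ?_ ?_
    · exact hK.1.submatrix _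
    · intro x hx
      set y : Fin P → ℝ := fun i => if h : i ∈ T then x ⟨i, h⟩ else 0 with hy
      have hyoff : ∀ i, i ∉ T → y i = 0 := fun i hi => by simp [hy, hi]
      have hyval : ∀ i : T, y i = x i := fun i => by simp [hy, i.2]
      have hyne : y ≠ 0 := by
        obtain ⟨i, hi⟩ := Function.ne_iff.mp hx
        exact Function.ne_iff.mpr ⟨i, by rw [hyval i]; simpa using hi⟩
      have hpos := hK.dotProduct_mulVec_pos hyne
      have hstar : star y = y := funext fun i => rfl
      rw [hstar] at hpos
      have hstar' : star x = x := funext fun i => rfl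
      rw [hstar']
      have hcalc : y ⬝ᵥ (K *ᵥ y) = x ⬝ᵥ (K' *ᵥ x) := by
        have houter : ∀ i, i ∉ T → y i * (K *ᵥ y) i = 0 := fun i hi => by
          rw [hyoff i hi]; ring
        calc y ⬝ᵥ (K *ᵥ y) = ∑ i, y i * (K *ᵥ y) i := rfl
          _ = ∑ i : T, y i * (K *ᵥ y) i := aux_sum_subtype T _ houter
          _ = ∑ i : T, x i * (K' *ᵥ x) i := by
              refine Finset.sum_congr rfl fun i _ => ?_
              rw [hyval i]
              congr 1
              have hinner : ∀ j, j ∉ T → K i j * y j = 0 := fun j hj => by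
                rw [hyoff j hj]; ring
              calc (K *ᵥ y) i = ∑ j, K i j * y j := rfl
                _ = ∑ j : T, K (i : Fin P) j * y j := aux_sum_subtype T _ hinner
                _ = ∑ j : T, K' i j * x j := by
                    refine Finset.sum_congr rfl fun j _ => ?_
                    rw [hyval j]; rfl
                _ = (K' *ᵥ x) i := rfl
          _ = x ⬝ᵥ (K' *ᵥ x) := rfl
      rwa [hcalc] at hpos
  have hdet : IsUnit K'.det := isUnit_iff_ne_zero.mpr hK'.det_pos.ne'
  set w : T → ℝ := fun t => if (t : Fin P) = b then -1 else 0 with hw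
  set u' : T → ℝ := K'⁻¹ *ᵥ w with hu'
  have hKu' : K' *ᵥ u' = w := by
    rw [hu', Matrix.mulVec_mulVec, Matrix.mul_nonsing_inv _ hdet, Matrix.one_mulVec]
  refine ⟨fun i => if h : i ∈ T then u' ⟨i, h⟩ else 0, fun i hi => by simp [hi], ?_⟩
  intro t ht
  have hcalc : (K *ᵥ fun i => if h : i ∈ T then u' ⟨i, h⟩ else 0) t = (K' *ᵥ u') ⟨t, ht⟩ := by
    have hinner : ∀ j, j ∉ T → K t j * (if h : j ∈ T then u' ⟨j, h⟩ else 0) = 0 :=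
      fun j hj => by simp [hj]
    calc (K *ᵥ fun i => if h : i ∈ T then u' ⟨i, h⟩ else 0) t
        = ∑ j, K t j * (if h : j ∈ T then u' ⟨j, h⟩ else 0) := rfl
      _ = ∑ j : T, K t (j : Fin P) * (if h : (j : Fin P) ∈ T then u' ⟨j, h⟩ else 0) :=
          aux_sum_subtype T _ hinner
      _ = ∑ j : T, K' ⟨t, ht⟩ j * u' j := by
          refine Finset.sum_congr rfl fun j _ => ?_
          rw [dif_pos j.2, Subtype.coe_eta]
          rfl
      _ = (K' *ᵥ u') ⟨t, ht⟩ := rfl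
  rw [hcalc, hKu', hw]

end AuxLemmas


/-- **Absence of cycles implies neighborhood stability.** If `Σ` is positive definite with
unit diagonal, conditional variances bounded below by `v² > 0`, and the associated
conditional independence graph contains no cycles, then for nonneighboring `a, b` the
vector `θ^{b,ne_a}` has at most one nonzero coordinate, bounded in absolute value by
`√(1 - v²)`, and `|S_a(b)| ≤ √(1 - v²) < 1`. -/
theorem no_cycles_implies_neighborhood_stability
    (P : ℕ) (S : Matrix (Fin P) (Fin P) ℝ) (hS : S.PosDef)
    (hdiag : ∀ a : Fin P, S a a = 1)
    (v : ℝ) (hv0 : 0 < v) (hv1 : v ≤ 1)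
    (hvar : ∀ a : Fin P, v ^ 2 ≤ (S⁻¹ a a)⁻¹)
    (θpop : Fin P → Set (Fin P) → Fin P → ℝ)
    (hθpop : ∀ (c : Fin P) (A : Set (Fin P)), MB.IsPopMin S c A (θpop c A))
    (hacyclic :
      (SimpleGraph.mk (fun i j : Fin P => i ≠ j ∧ S⁻¹ i j ≠ 0 ∧ S⁻¹ j i ≠ 0)
        ⟨fun i j h => ⟨h.1.symm, h.2.2, h.2.1⟩⟩ ⟨fun i h => h.1 rfl⟩).IsAcyclic) :
    ∀ a b : Fin P, b ≠ a → b ∉ MB.neigh S a →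
      {k : Fin P | θpop b (MB.neigh S a : Set (Fin P)) k ≠ 0}.Subsingleton ∧
      (∀ k : Fin P, |θpop b (MB.neigh S a : Set (Fin P)) k| ≤ Real.sqrt (1 - v ^ 2)) ∧
      |MB.Sfun S θpop a b| ≤ Real.sqrt (1 - v ^ 2) ∧
      Real.sqrt (1 - v ^ 2) < 1 := by
  open Matrix in
  intro a b hba hbA
  classical
  have hK : (S⁻¹).PosDef := hS.inv
  have hsymS : ∀ i j, S i j = S j i := fun i j => by
    have h := congrFun (congrFun hS.1 i) j
    rw [Matrix.conjTranspose_apply, star_trivial] at h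
    exact h.symm
  have hsymK : ∀ i j, S⁻¹ i j = S⁻¹ j i := fun i j => by
    have h := congrFun (congrFun hK.1 i) j
    rw [Matrix.conjTranspose_apply, star_trivial] at h
    exact h.symm
  set G : SimpleGraph (Fin P) :=
    SimpleGraph.mk (fun i j : Fin P => i ≠ j ∧ S⁻¹ i j ≠ 0 ∧ S⁻¹ j i ≠ 0)
      ⟨fun i j h => ⟨h.1.symm, h.2.2, h.2.1⟩⟩ ⟨fun i h => h.1 rfl⟩ with hGdef
  have hGac : G.IsAcyclic := hacyclic
  set A : Finset (Fin P) := MB.neigh S a with hA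
  have hAmem : ∀ k, k ∈ A ↔ (k ≠ a ∧ S⁻¹ a k ≠ 0) := by
    intro k; simp [hA, MB.neigh]
  have hAadj : ∀ k, k ∈ A → G.Adj a k := by
    intro k hk
    obtain ⟨h1, h2⟩ := (hAmem k).mp hk
    exact ⟨Ne.symm h1, h2, fun h => h2 ((hsymK a k).trans h)⟩
  have hAadj' : ∀ k, G.Adj a k → k ∈ A := fun k h => (hAmem k).mpr ⟨Ne.symm h.1, h.2.1⟩
  have haA : a ∉ A := fun h => ((hAmem a).mp h).1 rfl
  have hbA' : b ∉ A := hbA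
  set T : Set (Fin P) := Tset G A b with hT
  have hbT : b ∈ T := Tset_self hbA'
  obtain ⟨u, huoff, hKuT⟩ := aux_exists_u S⁻¹ hK T b hbT
  have hdetS : IsUnit S.det := isUnit_iff_ne_zero.mpr hS.det_pos.ne'
  have hKuoff : ∀ l, l ∉ T → l ∉ A → (S⁻¹ *ᵥ u) l = 0 := by
    intro l hlT hlA
    show ∑ j, S⁻¹ l j * u j = 0
    refine Finset.sum_eq_zero fun j _ => ?_
    by_cases hj : u j = 0
    · rw [hj]; ring
    · have hjT : j ∈ T := by by_contra h; exact hj (huoff j h)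
      have hKlj : S⁻¹ l j = 0 := by
        by_contra hK0
        have hadj : G.Adj j l :=
          ⟨fun h => hlT (h ▸ hjT), fun h => hK0 ((hsymK l j).trans h), hK0⟩
        exact hlT (Tset_closure hjT hadj hlA)
      rw [hKlj]; ring
  have hKub : (S⁻¹ *ᵥ u) b = -1 := by simpa using hKuT b hbT
  set θ : Fin P → ℝ := fun k => if k ∈ A then (S⁻¹ *ᵥ u) k else 0 with hθdef
  have hθA : ∀ k, k ∉ A → θ k = 0 := fun k hk => by
    simp only [hθdef]; exact if_neg hk
  have hθAS : ∀ k, k ∉ (↑A : Set (Fin P)) → θ k = 0 := fun k hk => hθA k (by simpa using hk)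
  have hθval : θ = fun k => Pi.single (M := fun _ => ℝ) b 1 k + (S⁻¹ *ᵥ u) k := by
    funext k
    simp only [hθdef]
    by_cases hk : k ∈ A
    · have hkb : k ≠ b := fun h => hbA' (h ▸ hk)
      rw [if_pos hk, Pi.single_apply, if_neg hkb, zero_add]
    · rw [if_neg hk]
      by_cases hkb : k = b
      · subst hkb
        rw [Pi.single_apply, if_pos rfl, hKub]; ring
      · rw [Pi.single_apply, if_neg hkb, zero_add]
        by_cases hkT : k ∈ T
        · have h := hKuT k hkT; rw [if_neg hkb] at h; exact h.symm
        · exact (hKuoff k hkT hk).symm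
  have hSθ : S *ᵥ θ = (fun i => S i b * 1) + u := by
    rw [hθval]
    have h : (fun k => Pi.single (M := fun _ => ℝ) b 1 k + (S⁻¹ *ᵥ u) k) = Pi.single b 1 + (S⁻¹ *ᵥ u) := rfl
    rw [h, Matrix.mulVec_add, (show S *ᵥ Pi.single b 1 = fun i => S i b * 1 from funext fun i => dotProduct_single _ _ _), Matrix.mulVec_mulVec,
      Matrix.mul_nonsing_inv _ hdetS, Matrix.one_mulVec]
  have hNE : ∀ k ∈ A, (S *ᵥ θ) k = S b k := by
    intro k hk
    have hkT : k ∉ T := fun h => Tset_not_mem_A h hk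
    rw [hSθ]
    show S k b * 1 + u k = S b k
    rw [huoff k hkT, hsymS k b]; ring
  have hsupport : ∀ k, θ k ≠ 0 → k ∈ A ∧ ∃ t, t ∈ T ∧ S⁻¹ k t ≠ 0 := by
    intro k hθk
    have hk : k ∈ A := by by_contra h; exact hθk (hθA k h)
    refine ⟨hk, ?_⟩
    have h2 : (S⁻¹ *ᵥ u) k ≠ 0 := by
      simp only [hθdef, if_pos hk] at hθk; exact hθk
    have h3 : ∑ j, S⁻¹ k j * u j ≠ 0 := h2
    obtain ⟨t, _, ht⟩ := Finset.exists_ne_zero_of_sum_ne_zero h3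
    have hut : u t ≠ 0 := right_ne_zero_of_mul ht
    have htT : t ∈ T := by by_contra h; exact hut (huoff t h)
    exact ⟨t, htT, left_ne_zero_of_mul ht⟩
  have hsub : ∀ k₁ k₂, θ k₁ ≠ 0 → θ k₂ ≠ 0 → k₁ = k₂ := by
    intro k₁ k₂ h₁ h₂
    obtain ⟨hk₁A, t₁, ht₁T, hKt₁⟩ := hsupport k₁ h₁
    obtain ⟨hk₂A, t₂, ht₂T, hKt₂⟩ := hsupport k₂ h₂
    have hadj₁ : G.Adj k₁ t₁ :=
      ⟨fun h => Tset_not_mem_A ht₁T (h ▸ hk₁A), hKt₁, fun h => hKt₁ ((hsymK k₁ t₁).trans h)⟩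
    have hadj₂ : G.Adj k₂ t₂ :=
      ⟨fun h => Tset_not_mem_A ht₂T (h ▸ hk₂A), hKt₂, fun h => hKt₂ ((hsymK k₂ t₂).trans h)⟩
    exact aux_unique_attach hGac hba haA hAadj hAadj' hk₁A hk₂A ht₁T ht₂T hadj₁ hadj₂
  have hmin := hθpop b (↑A : Set (Fin P))
  have hdzero : θpop b (↑A : Set (Fin P)) = θ := by
    set d : Fin P → ℝ := fun k => θpop b (↑A : Set (Fin P)) k - θ k with hd
    have hdA : ∀ k, k ∉ A → d k = 0 := by
      intro k hk
      simp only [hd]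
      rw [hmin.1 k (by simpa using hk), hθA k hk]; ring
    have hcross : d ⬝ᵥ (S *ᵥ θ - fun k => S b k) = 0 := by
      show ∑ l, d l * ((S *ᵥ θ - fun k => S b k) l) = 0
      refine Finset.sum_eq_zero fun l _ => ?_
      by_cases hl : l ∈ A
      · rw [Pi.sub_apply, hNE l hl]; ring
      · rw [hdA l hl]; ring
    have hsum : θ + d = θpop b (↑A : Set (Fin P)) := by
      funext k; simp [hd]
    have hdec := risk_decomp S hsymS b θ d
    rw [hsum, hcross] at hdec
    have hle := hmin.2 θ hθAS
    rw [hdec] at hle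
    have hQle : d ⬝ᵥ (S *ᵥ d) ≤ 0 := by linarith
    have hd0 : d = 0 := by
      by_contra h
      have hpos := hS.dotProduct_mulVec_pos h
      have hstar : star d = d := funext fun i => rfl
      rw [hstar] at hpos
      linarith
    funext k
    have hk := congrFun hd0 k
    simp only [hd, Pi.zero_apply] at hk
    linarith
  have hθb : θ b = 0 := hθA b hbA'
  have hcoord : ∀ k, θ k ≠ 0 → |θ k| ≤ Real.sqrt (1 - v ^ 2) := by
    intro k hk
    have hkA := (hsupport k hk).1
    have hθkval : θ k = S b k := by
      have h1 := hNE k hkA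
      have h2 : (S *ᵥ θ) k = ∑ l, S k l * θ l := rfl
      rw [h2, Finset.sum_eq_single k (fun l _ hlk => by
        have h0 : θ l = 0 := by by_contra h; exact hlk (hsub l k h hk)
        rw [h0]; ring) (fun h => absurd (Finset.mem_univ k) h)] at h1
      rw [hdiag k, one_mul] at h1
      exact h1
    have hrisk : MB.popRisk S b θ = 1 - θ k ^ 2 := by
      unfold MB.popRisk
      rw [Finset.sum_eq_single k (fun l _ hlk => by
        have h0 : θ l = 0 := by by_contra h; exact hlk (hsub l k h hk)
        rw [h0]; ring) (fun h => absurd (Finset.mem_univ k) h)]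
      rw [Finset.sum_eq_single (f := fun k' => ∑ l, θ k' * S k' l * θ l) k (fun l _ hlk => by
        have h0 : θ l = 0 := by by_contra h; exact hlk (hsub l k h hk)
        refine Finset.sum_eq_zero fun j _ => by rw [h0]; ring)
        (fun h => absurd (Finset.mem_univ k) h)]
      rw [Finset.sum_eq_single (f := fun l => θ k * S k l * θ l) k (fun l _ hlk => by
        have h0 : θ l = 0 := by by_contra h; exact hlk (hsub l k h hk)
        simp only [h0, mul_zero]) (fun h => absurd (Finset.mem_univ k) h)]
      rw [hdiag b, hdiag k, ← hθkval]
      ring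
    have hlow := aux_lower S hS hsymS b θ hθb
    rw [hrisk] at hlow
    have hvb := hvar b
    have hsq : θ k ^ 2 ≤ 1 - v ^ 2 := by linarith
    calc |θ k| = Real.sqrt (θ k ^ 2) := (Real.sqrt_sq_eq_abs _).symm
      _ ≤ Real.sqrt (1 - v ^ 2) := Real.sqrt_le_sqrt hsq
  refine ⟨?_, ?_, ?_, ?_⟩
  · intro k₁ hk₁ k₂ hk₂
    simp only [Set.mem_setOf_eq, hdzero] at hk₁ hk₂
    exact hsub _ _ hk₁ hk₂
  · intro k
    rw [hdzero]
    by_cases h : θ k = 0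
    · rw [h]; simpa using Real.sqrt_nonneg (1 - v ^ 2)
    · exact hcoord k h
  · have hSfun : MB.Sfun S θpop a b
        = ∑ k ∈ A, Real.sign (θpop a (↑A : Set (Fin P)) k) * θ k := by
      unfold MB.Sfun
      rw [hdzero]
    rw [hSfun]
    calc |∑ k ∈ A, Real.sign (θpop a (↑A : Set (Fin P)) k) * θ k|
        ≤ ∑ k ∈ A, |Real.sign (θpop a (↑A : Set (Fin P)) k) * θ k| :=
          Finset.abs_sum_le_sum_abs _ _
      _ ≤ ∑ k ∈ A, |θ k| := by
          refine Finset.sum_le_sum fun k _ => ?_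
          rw [abs_mul]
          have hs : |Real.sign (θpop a (↑A : Set (Fin P)) k)| ≤ 1 := by
            rcases Real.sign_apply_eq (θpop a (↑A : Set (Fin P)) k) with h | h | h <;>
              rw [h] <;> norm_num
          nlinarith [abs_nonneg (θ k)]
      _ ≤ Real.sqrt (1 - v ^ 2) := by
          by_cases hex : ∃ k ∈ A, θ k ≠ 0
          · obtain ⟨k₀, hk₀A, hk₀⟩ := hex
            rw [Finset.sum_eq_single k₀ (fun l _ hlk => by
              have h0 : θ l = 0 := by by_contra h; exact hlk (hsub l k₀ h hk₀)
              rw [h0, abs_zero]) (fun h => absurd hk₀A h)]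
            exact hcoord k₀ hk₀
          · push_neg at hex
            rw [Finset.sum_eq_zero fun k hk => by rw [hex k hk, abs_zero]]
            exact Real.sqrt_nonneg _
  · have h1 : (0:ℝ) ≤ 1 - v ^ 2 := by nlinarith
    have h2 : 1 - v ^ 2 < 1 := by nlinarith
    calc Real.sqrt (1 - v ^ 2) < Real.sqrt 1 := Real.sqrt_lt_sqrt h1 h2
      _ = 1 := Real.sqrt_one
end
end
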